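/- Let G be a connected simple graph such that d(x) + d(y) ≥ t_2 for every pair of nonadjacent vertices x, y, where t_2 is the number of vertices of a longest path in G. Then G has a Hamilton cycle (or G has at most two vertices). -/

import Mathlib

open SimpleGraph

/-- The degree of a vertex: the cardinality of its neighborhood. -/
noncomputable def deg {V : Type*} (G : SimpleGraph V) (x : V) : ℕ :=
  (G.neighborSet x).ncard

/-- The number of leaves (vertices of degree 1) of a subgraph. -/
noncomputable def leafCount {V : Type*} {G : SimpleGraph V} (H : G.Subgraph) : ℕ :=
  {v : H.verts | (H.coe.neighborSet v).ncard = 1}.ncard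

/-- `H` is a tree with at most `k` leaves (a `k`-ended tree). -/
def IsEndedTree {V : Type*} {G : SimpleGraph V} (H : G.Subgraph) (k : ℕ) : Prop :=
  H.coe.IsTree ∧ leafCount H ≤ k

/-- `t_k`: the maximum order of a subgraph of `G` that is a tree with at most `k` leaves. -/
noncomputable def treeOrd {V : Type*} (G : SimpleGraph V) (k : ℕ) : ℕ :=
  sSup {m | ∃ H : G.Subgraph, IsEndedTree H k ∧ H.verts.ncard = m}

/-- The number of vertices of a longest path in `G`. -/
noncomputable def pathOrd {V : Type*} (G : SimpleGraph V) : ℕ :=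
  sSup {m | ∃ (u v : V) (p : G.Walk u v), p.IsPath ∧ p.support.length = m}

/-- `s` is an independent set of vertices of `G`. -/
def IsIndep {V : Type*} (G : SimpleGraph V) (s : Set V) : Prop :=
  s.Pairwise fun a b => ¬ G.Adj a b

/-- `σ₃`: the minimum degree sum over independent triples of vertices. -/
noncomputable def sigma3 {V : Type*} (G : SimpleGraph V) : ℕ :=
  sInf {s | ∃ x y z : V, x ≠ y ∧ x ≠ z ∧ y ≠ z ∧
    ¬G.Adj x y ∧ ¬G.Adj x z ∧ ¬G.Adj y z ∧ s = deg G x + deg G y + deg G z}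


namespace Hamaux

variable {V : Type*} {G : SimpleGraph V}

lemma getVert_mem_support {u v : V} (p : G.Walk u v) {i : ℕ} (hi : i ≤ p.length) :
    p.getVert i ∈ p.support :=
  Walk.mem_support_iff_exists_getVert.mpr ⟨i, rfl, hi⟩

lemma IsPath.getVert_inj {u v : V} {p : G.Walk u v} (hp : p.IsPath) :
    ∀ {i j : ℕ}, i ≤ p.length → j ≤ p.length → p.getVert i = p.getVert j → i = j := by
  induction p with
  | nil => intro i j hi hj _; simp only [Walk.length_nil, Nat.le_zero] at hi hj; omega
  | cons h q ih =>
    intro i j hi hj hij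
    rw [Walk.isPath_def, Walk.support_cons, List.nodup_cons] at hp
    match i, j with
    | 0, 0 => rfl
    | 0, j + 1 =>
      exfalso
      rw [Walk.getVert_zero, Walk.getVert_cons_succ] at hij
      exact hp.1 (hij ▸ getVert_mem_support q (by simpa using hj))
    | i + 1, 0 =>
      exfalso
      rw [Walk.getVert_zero, Walk.getVert_cons_succ] at hij
      exact hp.1 (hij ▸ getVert_mem_support q (by simpa using hi))
    | i + 1, j + 1 =>
      rw [Walk.getVert_cons_succ, Walk.getVert_cons_succ] at hij
      have := ih (Walk.IsPath.mk' hp.2) (by simpa using hi) (by simpa using hj) hij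
      omega

lemma support_getElem? {u v : V} (p : G.Walk u v) : ∀ {i : ℕ}, i ≤ p.length →
    p.support[i]? = some (p.getVert i) := by
  induction p with
  | nil => intro i hi; simp only [Walk.length_nil, Nat.le_zero] at hi; subst hi; simp
  | cons h q ih =>
    intro i hi
    match i with
    | 0 => simp
    | i + 1 =>
      rw [Walk.support_cons, Walk.getVert_cons_succ]
      simpa using ih (by simpa using hi)

/-- the edge joining the two endpoints of a path of length ≥ 2 is not an edge of the path -/
lemma edge_ends_not_mem {a b : V} {q : G.Walk a b} (hq : q.IsPath) (h2 : 2 ≤ q.length) :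
    s(b, a) ∉ q.edges := by
  intro hmem
  cases q with
  | nil => simp at h2
  | cons h r =>
    rename_i x
    rw [Walk.edges_cons, List.mem_cons] at hmem
    rw [Walk.cons_isPath_iff] at hq
    rcases hmem with hmem | hmem
    · rw [Sym2.eq_iff] at hmem
      rcases hmem with ⟨hba, hax⟩ | ⟨hbx, -⟩
      · subst hba
        exact hq.2 (hax ▸ r.end_mem_support)
      · subst hbx
        have : r = Walk.nil := Walk.isPath_iff_eq_nil.mp hq.1
        subst this
        simp at h2
    · exact hq.2 (Walk.snd_mem_support_of_mem_edges r hmem)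

/-- A closed walk of length ≥ 3 whose support-tail has no duplicates is a cycle. -/
lemma isCycle_of_tail_nodup {w : V} {c : G.Walk w w} (hnd : c.support.tail.Nodup)
    (h3 : 3 ≤ c.length) : c.IsCycle := by
  have hnil : ¬ c.Nil := by rw [Walk.not_nil_iff_lt_length]; omega
  have hc := Walk.cons_tail_eq c hnil
  rw [← hc]
  rw [Walk.cons_isCycle_iff]
  have htp : c.tail.IsPath := by
    rw [Walk.isPath_def, Walk.support_tail_of_not_nil c hnil]
    exact hnd
  refine ⟨htp, ?_⟩
  apply edge_ends_not_mem htp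
  have := Walk.length_tail_add_one hnil
  omega

end Hamaux

namespace Hamaux

variable {V : Type*} {G : SimpleGraph V}

/-- Build a walk from a list of vertices with chained adjacency. -/
def mkWalk : (u : V) → (l : List V) → List.Chain G.Adj u l →
    G.Walk u ((u :: l).getLast (List.cons_ne_nil u l))
  | _, [], _ => Walk.nil
  | u, a :: l, h =>
    (Walk.cons (List.chain_cons.mp h).1 (mkWalk a l (List.chain_cons.mp h).2)).copy rfl
      (List.getLast_cons (List.cons_ne_nil a l)).symm

@[simp] lemma mkWalk_support : ∀ (u : V) (l : List V) (h : List.Chain G.Adj u l),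
    (mkWalk u l h).support = u :: l
  | _, [], _ => rfl
  | u, a :: l, h => by
    rw [mkWalk, Walk.support_copy, Walk.support_cons]
    exact congrArg (u :: ·) (mkWalk_support a l _)

@[simp] lemma mkWalk_length : ∀ (u : V) (l : List V) (h : List.Chain G.Adj u l),
    (mkWalk u l h).length = l.length
  | _, [], _ => rfl
  | u, a :: l, h => by
    rw [mkWalk, Walk.length_copy, Walk.length_cons]
    exact congrArg (· + 1) (mkWalk_length a l _)

/-- boundary edge: a walk from outside a set into it passes an edge crossing in -/
lemma exists_boundary {S : Set V} : ∀ {x y : V} (q : G.Walk x y), x ∉ S → y ∈ S →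
    ∃ a b, G.Adj a b ∧ a ∉ S ∧ b ∈ S := by
  intro x y q
  induction q with
  | nil => intro hx hy; exact absurd hy hx
  | cons h r ih =>
    rename_i a b c
    intro hx hy
    by_cases hb : b ∈ S
    · exact ⟨a, b, h, hx, hb⟩
    · exact ih hb hy

end Hamaux

namespace Hamaux

variable {V : Type*} {G : SimpleGraph V}

section fin
variable [Fintype V]

lemma pathOrd_bdd : BddAbove {m | ∃ (u v : V) (p : G.Walk u v), p.IsPath ∧ p.support.length = m} := by
  refine ⟨Fintype.card V, ?_⟩
  rintro m ⟨u, v, p, hp, rfl⟩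
  exact hp.support_nodup.length_le_card

lemma le_pathOrd {a b : V} (q : G.Walk a b) (hq : q.IsPath) :
    q.support.length ≤ pathOrd G :=
  le_csSup pathOrd_bdd ⟨a, b, q, hq, rfl⟩

lemma exists_longest [Nonempty V] :
    ∃ (u v : V) (p : G.Walk u v), p.IsPath ∧ p.support.length = pathOrd G := by
  have : pathOrd G ∈ {m | ∃ (u v : V) (p : G.Walk u v), p.IsPath ∧ p.support.length = m} := by
    apply Nat.sSup_mem _ pathOrd_bdd
    exact ⟨1, Classical.arbitrary V, Classical.arbitrary V, Walk.nil, Walk.IsPath.nil, rfl⟩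
  exact this

/-- closed walk support membership is same as tail membership -/
lemma mem_tail_of_mem_support {w z : V} {c : G.Walk w w} (hnil : ¬ c.Nil)
    (hz : z ∈ c.support) : z ∈ c.support.tail := by
  rw [Walk.support_eq_cons, List.mem_cons] at hz
  rcases hz with rfl | hz
  · rw [← Walk.support_tail_of_not_nil c hnil]
    exact Walk.end_mem_support c.tail
  · exact hz

/-- The engine: from a cycle covering the support of a longest path and having one more
vertex than it, conclude a Hamiltonian cycle exists. -/
lemma engine [DecidableEq V] (hconn : G.Connected) {u v w : V} {p : G.Walk u v}
    (hp : p.IsPath) (hlen : p.support.length = pathOrd G)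
    (c : G.Walk w w) (hc : c.IsCycle)
    (hcov : ∀ z ∈ p.support, z ∈ c.support)
    (hclen : c.support.length = p.support.length + 1) :
    ∃ (x : V) (d : G.Walk x x), d.IsHamiltonianCycle := by
  have hnil : ¬ c.Nil := hc.not_nil
  by_cases hfull : ∀ z : V, z ∈ c.support
  · refine ⟨w, c, ?_, ?_⟩
    · exact hc
    · intro z
      rw [Walk.support_tail_of_not_nil c hnil]
      exact List.count_eq_one_of_mem hc.2 (mem_tail_of_mem_support hnil (hfull z))
  · push_neg at hfull
    obtain ⟨x, hx⟩ := hfull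
    exfalso
    obtain ⟨q⟩ := hconn.preconnected x w
    obtain ⟨a, b, hab, ha, hb⟩ :=
      exists_boundary (S := {z | z ∈ c.support}) q hx c.start_mem_support
    -- rotate the cycle to start at b
    set c' := c.rotate b hb with hc'def
    have hc'cyc : c'.IsCycle := hc.rotate hb
    have hc'nil : ¬ c'.Nil := hc'cyc.not_nil
    have hrot : c'.support.tail ~r c.support.tail := Walk.support_rotate c b hb
    have hmem : ∀ z, z ∈ c'.support ↔ z ∈ c.support := by
      intro z
      constructor
      · intro hz
        exact List.mem_of_mem_tail (hrot.perm.mem_iff.mp (mem_tail_of_mem_support hc'nil hz))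
      · intro hz
        exact List.mem_of_mem_tail (hrot.perm.mem_iff.mpr (mem_tail_of_mem_support hnil hz))
    have htail : c'.tail.IsPath := by
      rw [Walk.isPath_def, Walk.support_tail_of_not_nil c' hc'nil]
      exact hc'cyc.2
    -- extension path
    have hanotin : a ∉ c'.tail.reverse.support := by
      rw [Walk.support_reverse, List.mem_reverse, Walk.support_tail_of_not_nil c' hc'nil]
      intro hmem'
      exact ha ((hmem a).mp (List.mem_of_mem_tail hmem'))
    have hnew : (Walk.cons hab c'.tail.reverse).IsPath :=
      Walk.IsPath.cons htail.reverse hanotin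
    have hlen2 : (Walk.cons hab c'.tail.reverse).support.length = pathOrd G + 1 := by
      have h1 : c'.support.length = c.support.length := by
        rw [Walk.support_eq_cons c', Walk.support_eq_cons c]
        simp only [List.length_cons, hrot.perm.length_eq]
      have h2 : c'.tail.support.length = c'.support.length - 1 := by
        rw [Walk.support_tail_of_not_nil c' hc'nil, List.length_tail]
      rw [Walk.support_cons, List.length_cons, Walk.support_reverse, List.length_reverse,
        h2, h1, hclen, hlen]
      omega
    have := le_pathOrd _ hnew
    rw [hlen2] at this
    omega

end fin
end Hamaux


/-- If `G` is connected and `d(x) + d(y) ≥ t₂` (the order of a longest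
path) for every pair of nonadjacent vertices, then `G` has a Hamilton cycle (or `G` has
at most two vertices). -/
theorem hamiltonian_of_sigma_two_ge_pathOrd {V : Type*} [Fintype V] [DecidableEq V]
    (G : SimpleGraph V) (hconn : G.Connected)
    (hdeg : ∀ x y : V, x ≠ y → ¬ G.Adj x y → pathOrd G ≤ deg G x + deg G y) :
    (∃ (v : V) (c : G.Walk v v), c.IsHamiltonianCycle) ∨ Fintype.card V ≤ 2 := by
  classical
  by_cases hcard : Fintype.card V ≤ 2
  · exact Or.inr hcard
  push_neg at hcard
  left
  have hne : Nonempty V := hconn.nonempty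
  -- the longest path has at least 3 vertices
  have ht3 : 3 ≤ pathOrd G := by
    by_contra hlt
    push_neg at hlt
    have hadj : ∀ a b : V, a ≠ b → G.Adj a b := by
      intro a b hab
      obtain ⟨q⟩ := hconn.preconnected a b
      set r := q.toPath with hr
      have hle := Hamaux.le_pathOrd (r : G.Walk a b) r.2
      rw [Walk.length_support] at hle
      have h1 : (r : G.Walk a b).length ≠ 0 := by
        intro h0
        exact hab (Walk.eq_of_length_eq_zero h0)
      have h1' : (r : G.Walk a b).length = 1 := by omega
      have h2 := (r : G.Walk a b).adj_getVert_succ (i := 0) (by omega)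
      rw [Walk.getVert_zero, show (0 : ℕ) + 1 = (r : G.Walk a b).length by omega,
        Walk.getVert_length] at h2
      exact h2
    obtain ⟨a, b, hab⟩ := Fintype.exists_pair_of_one_lt_card (α := V) (by omega)
    obtain ⟨c, hca, hcb⟩ : ∃ c : V, c ≠ a ∧ c ≠ b := by
      by_contra hc
      push_neg at hc
      have hsub : (Finset.univ : Finset V) ⊆ {a, b} := by
        intro c _
        rcases eq_or_ne c a with rfl | h
        · simp
        · simp [hc c h]
      have := Finset.card_le_card hsub
      have h2 : ({a, b} : Finset V).card ≤ 2 :=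
        (Finset.card_insert_le _ _).trans (by simp)
      rw [Finset.card_univ] at this
      omega
    have hq : (Walk.cons (hadj a b hab) (Walk.cons (hadj b c hcb.symm) Walk.nil)).IsPath := by
      rw [Walk.isPath_def]
      simp [hab, hca.symm, hcb.symm]
    have := Hamaux.le_pathOrd _ hq
    simp at this
    omega
  obtain ⟨u, v, p, hp, hlen⟩ := Hamaux.exists_longest (G := G)
  have hsl : p.support.length = p.length + 1 := Walk.length_support p
  have hn2 : 2 ≤ p.length := by omega
  set n := p.length with hn
  have hne_uv : u ≠ v := by
    intro h
    subst h
    rw [Walk.isPath_iff_eq_nil.mp hp] at hsl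
    simp at hsl
    omega
  -- neighbors of the endpoints lie on the path
  have hNu : ∀ z, G.Adj u z → z ∈ p.support := by
    intro z hz
    by_contra hzs
    have := Hamaux.le_pathOrd (Walk.cons hz.symm p) (hp.cons hzs)
    rw [Walk.support_cons, List.length_cons, hlen] at this
    omega
  have hNv : ∀ z, G.Adj v z → z ∈ p.support := by
    intro z hz
    by_contra hzs
    have hzs' : z ∉ p.reverse.support := by
      rwa [Walk.support_reverse, List.mem_reverse]
    have := Hamaux.le_pathOrd (Walk.cons hz.symm p.reverse) (hp.reverse.cons hzs')
    rw [Walk.support_cons, List.length_cons, Walk.support_reverse, List.length_reverse,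
      hlen] at this
    omega
  by_cases huv : G.Adj u v
  · -- close the path into a cycle directly
    have hcyc : (Walk.cons huv.symm p).IsCycle := by
      rw [Walk.cons_isCycle_iff]
      exact ⟨hp, Hamaux.edge_ends_not_mem hp hn2⟩
    refine Hamaux.engine hconn hp hlen (Walk.cons huv.symm p) hcyc ?_ ?_
    · intro z hz
      rw [Walk.support_cons]
      exact List.mem_cons_of_mem _ hz
    · rw [Walk.support_cons, List.length_cons]
  · -- endpoints nonadjacent: rotation argument
    have hsum := hdeg u v hne_uv huv
    have hdegeq : ∀ x : V, deg G x = G.degree x := by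
      intro x
      rw [deg, Set.ncard_eq_toFinset_card', Set.toFinset_card,
        SimpleGraph.card_neighborSet_eq_degree]
    have hvend : p.getVert n = v := by rw [hn]; exact p.getVert_length
    set A := (Finset.range n).filter (fun i => G.Adj u (p.getVert (i + 1))) with hA_def
    set B := (Finset.range n).filter (fun i => G.Adj v (p.getVert i)) with hB_def
    have hA : A.card = G.degree u := by
      show A.card = (G.neighborFinset u).card
      apply Finset.card_bij (fun i _ => p.getVert (i + 1))
      · intro i hi
        rw [SimpleGraph.mem_neighborFinset]
        exact (Finset.mem_filter.mp hi).2
      · intro i hi j hj hij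
        simp only [hA_def, Finset.mem_filter, Finset.mem_range] at hi hj
        have := Hamaux.IsPath.getVert_inj hp (i := i + 1) (j := j + 1)
          (by omega) (by omega) hij
        omega
      · intro z hz
        rw [SimpleGraph.mem_neighborFinset] at hz
        obtain ⟨j, hj, hjle⟩ := Walk.mem_support_iff_exists_getVert.mp (hNu z hz)
        have hj0 : j ≠ 0 := by
          intro h
          subst h
          rw [Walk.getVert_zero] at hj
          exact G.ne_of_adj hz hj
        obtain ⟨i, rfl⟩ : ∃ i, j = i + 1 := ⟨j - 1, by omega⟩
        refine ⟨i, ?_, hj⟩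
        simp only [hA_def, Finset.mem_filter, Finset.mem_range]
        exact ⟨by omega, hj ▸ hz⟩
    have hB : B.card = G.degree v := by
      show B.card = (G.neighborFinset v).card
      apply Finset.card_bij (fun i _ => p.getVert i)
      · intro i hi
        rw [SimpleGraph.mem_neighborFinset]
        exact (Finset.mem_filter.mp hi).2
      · intro i hi j hj hij
        simp only [hB_def, Finset.mem_filter, Finset.mem_range] at hi hj
        exact Hamaux.IsPath.getVert_inj hp (by omega) (by omega) hij
      · intro z hz
        rw [SimpleGraph.mem_neighborFinset] at hz
        obtain ⟨j, hj, hjle⟩ := Walk.mem_support_iff_exists_getVert.mp (hNv z hz)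
        have hjn : j ≠ n := by
          intro h
          subst h
          rw [hvend] at hj
          exact G.ne_of_adj hz hj
        refine ⟨j, ?_, hj⟩
        simp only [hB_def, Finset.mem_filter, Finset.mem_range]
        exact ⟨by omega, hj ▸ hz⟩
    have hABcard : n + 1 ≤ A.card + B.card := by
      calc n + 1 = pathOrd G := by omega
      _ ≤ deg G u + deg G v := hsum
      _ = A.card + B.card := by rw [hdegeq, hdegeq, hA, hB]
    have hABsub : A ∪ B ⊆ Finset.range n :=
      Finset.union_subset (Finset.filter_subset _ _) (Finset.filter_subset _ _)
    have hinter : (A ∩ B).Nonempty := by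
      have h1 := Finset.card_inter_add_card_union A B
      have h2 := Finset.card_le_card hABsub
      rw [Finset.card_range] at h2
      rw [← Finset.card_pos]
      omega
    obtain ⟨i, hi⟩ := hinter
    rw [Finset.mem_inter] at hi
    have hiA : G.Adj u (p.getVert (i + 1)) := (Finset.mem_filter.mp hi.1).2
    have hiB : G.Adj v (p.getVert i) := (Finset.mem_filter.mp hi.2).2
    have hin : i < n := Finset.mem_range.mp (Finset.mem_filter.mp hi.1).1
    have hi0 : 0 < i := by
      rcases Nat.eq_zero_or_pos i with h | h
      · subst h
        rw [Walk.getVert_zero] at hiB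
        exact absurd hiB.symm huv
      · exact h
    have hi1 : i + 1 < n := by
      rcases eq_or_lt_of_le (by omega : i + 1 ≤ n) with h | h
      · rw [h, hvend] at hiA
        exact absurd hiA huv
      · exact h
    -- build the cycle
    set s' := p.support.tail with hs'
    have hsupp : p.support = u :: s' := Walk.support_eq_cons p
    have hs'len : s'.length = n := by rw [hs', List.length_tail, hsl]; omega
    have hs'get : ∀ k, k ≤ n → k ≠ 0 → s'[k-1]? = some (p.getVert k) := by
      intro k hk hk0
      rw [hs', List.getElem?_tail, show k - 1 + 1 = k by omega]
      exact Hamaux.support_getElem? p (by omega)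
    set l := s'.take i ++ ((s'.drop i).reverse ++ [u]) with hl
    have hd_ne : (s'.drop i).reverse ≠ [] := by
      simp only [ne_eq, List.reverse_eq_nil_iff]
      apply List.ne_nil_of_length_pos
      rw [List.length_drop]
      omega
    -- chain of adjacencies around the cycle
    have hch : List.Chain' G.Adj p.support := p.isChain_adj_support
    have hchs' : List.Chain' G.Adj s' := by rw [hs']; exact hch.tail
    have c1 : List.Chain' G.Adj (u :: s'.take i) := by
      have he : u :: s'.take i = p.support.take (i + 1) := by
        rw [hsupp, List.take_succ_cons]
      rw [he]
      exact hch.take _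
    have c2 : List.Chain' G.Adj (s'.drop i).reverse :=
      List.isChain_reverse.mpr ((hchs'.drop i).imp fun _ _ h => h.symm)
    have he : u :: s'.take i = p.support.take (i + 1) := by
      rw [hsupp, List.take_succ_cons]
    have j1 : (u :: s'.take i).getLast? = some (p.getVert i) := by
      have hlen1 : (p.support.take (i + 1)).length = i + 1 := by
        rw [List.length_take, hsl]; omega
      rw [he, List.getLast?_eq_getElem?, hlen1, Nat.add_sub_cancel, List.getElem?_take]
      simpa using Hamaux.support_getElem? p (by omega)
    have j2 : (s'.drop i).reverse.head? = some v := by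
      rw [List.head?_reverse, List.getLast?_eq_getElem?, List.length_drop, List.getElem?_drop,
        hs'len, show i + (n - i - 1) = n - 1 by omega]
      have := hs'get n le_rfl (by omega)
      rw [this, hvend]
    have j3 : (s'.drop i).reverse.getLast? = some (p.getVert (i + 1)) := by
      rw [List.getLast?_reverse, List.head?_drop]
      have := hs'get (i + 1) (by omega) (by omega)
      simpa using this
    have hchain : List.Chain' G.Adj ((u :: s'.take i) ++ ((s'.drop i).reverse ++ [u])) := by
      show List.IsChain _ _
      rw [List.isChain_append]
      refine ⟨c1, ?_, ?_⟩
      · rw [List.isChain_append]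
        refine ⟨c2, List.isChain_singleton u, ?_⟩
        intro x hx y hy
        rw [j3] at hx
        simp only [Option.mem_some_iff, List.head?_cons] at hx hy
        rw [← hx, ← hy]
        exact hiA.symm
      · intro x hx y hy
        have hhd : ((s'.drop i).reverse ++ [u]).head? = some v := by
          cases hrev : (s'.drop i).reverse with
          | nil => exact absurd hrev hd_ne
          | cons a t =>
            rw [hrev] at j2
            simpa using j2
        rw [j1] at hx
        rw [hhd] at hy
        simp only [Option.mem_some_iff] at hx hy
        rw [← hx, ← hy]
        exact hiB.symm
    have hchain2 : List.Chain G.Adj u l := by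
      have hul : u :: l = (u :: s'.take i) ++ ((s'.drop i).reverse ++ [u]) := by
        simp [hl]
      have h2 : List.Chain' G.Adj (u :: l) := by rw [hul]; exact hchain
      exact h2
    set cw := Hamaux.mkWalk u l hchain2 with hcw
    have hend : (u :: l).getLast (List.cons_ne_nil u l) = u := by
      have hul2 : u :: l = (u :: (s'.take i ++ (s'.drop i).reverse)) ++ [u] := by
        simp [hl]
      have h1 : (u :: l).getLast? = some u := by
        rw [hul2, List.getLast?_concat]
      have h2 := List.getLast?_eq_getLast (List.cons_ne_nil u l)
      rw [h1] at h2
      exact (Option.some_inj.mp h2).symm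
    set c := cw.copy rfl hend with hc
    have hcsup : c.support = u :: l := by
      rw [hc, Walk.support_copy, hcw, Hamaux.mkWalk_support]
    have hperm : l.Perm (s' ++ [u]) := by
      have p1 : (s'.take i ++ ((s'.drop i).reverse ++ [u])).Perm
          (s'.take i ++ (s'.drop i ++ [u])) :=
        List.Perm.append_left _ (List.Perm.append_right _ (List.reverse_perm _))
      rw [hl]
      exact p1.trans (by rw [← List.append_assoc, List.take_append_drop])
    have hnodupl : l.Nodup := by
      rw [hperm.nodup_iff]
      have hns : (u :: s').Nodup := by rw [← hsupp]; exact hp.support_nodup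
      rw [List.nodup_cons] at hns
      simp [List.nodup_append, hns.1, hns.2]
      exact fun a ha h => hns.1 (h ▸ ha)
    have hclen' : c.length = n + 1 := by
      rw [hc, Walk.length_copy, hcw, Hamaux.mkWalk_length, hperm.length_eq,
        List.length_append, hs'len]
      simp
    have hcyc : c.IsCycle := by
      apply Hamaux.isCycle_of_tail_nodup
      · rw [hcsup]
        simpa using hnodupl
      · omega
    have hcov : ∀ z ∈ p.support, z ∈ c.support := by
      intro z hz
      rw [hcsup, List.mem_cons]
      rw [hsupp, List.mem_cons] at hz
      rcases hz with rfl | hz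
      · exact Or.inl rfl
      · exact Or.inr (hperm.mem_iff.mpr (List.mem_append_left _ hz))
    have hclen : c.support.length = p.support.length + 1 := by
      rw [hcsup, List.length_cons, hperm.length_eq, List.length_append, hs'len, hsl]
      simp
    exact Hamaux.engine hconn hp hlen c hcyc hcov hclen
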